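/- Let f(λ) = (1/n)∑_{l=1}^n g_l/(1 + λ'g_l) for vectors g_l ∈ ℝ^d, defined on {λ : 1 + λ'g_l > 0 for all l}. If S = (1/n)∑ g_lg_l' is positive definite, then f is continuously differentiable with Jacobian Df(λ) = −(1/n)∑ g_lg_l'/(1 + λ'g_l)², which is negative definite; hence f is injective on its (convex) domain. -/

import Mathlib

open Matrix Finset

private theorem el_quadform {n d : ℕ} (g : Fin n → Fin d → ℝ) (c : Fin n → ℝ) (x : Fin d → ℝ) :
    x ⬝ᵥ ((∑ l, c l • vecMulVec (g l) (g l)) *ᵥ x) = ∑ l, c l * (x ⬝ᵥ g l)^2 := by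
  simp only [dotProduct, mulVec, vecMulVec_apply, Finset.mul_sum, Finset.sum_mul,
    Finset.sum_apply, Matrix.sum_apply, Matrix.smul_apply, smul_eq_mul, sq]
  rw [Finset.sum_congr rfl fun i _ => Finset.sum_comm, Finset.sum_comm]
  exact Finset.sum_congr rfl fun l _ => Finset.sum_congr rfl fun i _ =>
    Finset.sum_congr rfl fun j _ => by ring

private theorem el_dot_sum_smul {n d : ℕ} (g : Fin n → Fin d → ℝ) (c : Fin n → ℝ)
    (x : Fin d → ℝ) : x ⬝ᵥ (∑ l, c l • g l) = ∑ l, c l * (x ⬝ᵥ g l) := by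
  simp only [dotProduct, Finset.sum_apply, Pi.smul_apply, smul_eq_mul, Finset.mul_sum]
  rw [Finset.sum_comm]
  exact Finset.sum_congr rfl fun l _ => Finset.sum_congr rfl fun i _ => by ring

private noncomputable def el_dotCLM (d : ℕ) (w : Fin d → ℝ) : (Fin d → ℝ) →L[ℝ] ℝ :=
  LinearMap.toContinuousLinearMap
    { toFun := fun v => v ⬝ᵥ w
      map_add' := fun a b => add_dotProduct a b w
      map_smul' := fun r a => smul_dotProduct r a w }

theorem score_function_injective
    (n d : ℕ) (hn : 0 < n) (g : Fin n → (Fin d → ℝ))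
    (hS : ((n : ℝ)⁻¹ • ∑ l, Matrix.vecMulVec (g l) (g l)).PosDef) :
    Convex ℝ {lam : Fin d → ℝ | ∀ l, 0 < 1 + lam ⬝ᵥ g l} ∧
    (∀ lam ∈ {lam : Fin d → ℝ | ∀ l, 0 < 1 + lam ⬝ᵥ g l},
      HasFDerivAt (fun lam : Fin d → ℝ => (n : ℝ)⁻¹ • ∑ l, (1 + lam ⬝ᵥ g l)⁻¹ • g l)
        (LinearMap.toContinuousLinearMap
          ((-((n : ℝ)⁻¹ • ∑ l, ((1 + lam ⬝ᵥ g l) ^ 2)⁻¹ •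
            Matrix.vecMulVec (g l) (g l))).mulVecLin)) lam ∧
      (-(-((n : ℝ)⁻¹ • ∑ l, ((1 + lam ⬝ᵥ g l) ^ 2)⁻¹ •
            Matrix.vecMulVec (g l) (g l)))).PosDef) ∧
    Set.InjOn (fun lam : Fin d → ℝ => (n : ℝ)⁻¹ • ∑ l, (1 + lam ⬝ᵥ g l)⁻¹ • g l)
      {lam : Fin d → ℝ | ∀ l, 0 < 1 + lam ⬝ᵥ g l} := by
  have hnR : (0:ℝ) < (n:ℝ)⁻¹ := by positivity
  -- key consequence of positive definiteness
  have hex : ∀ x : Fin d → ℝ, x ≠ 0 → ∃ l, x ⬝ᵥ g l ≠ 0 := by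
    intro x hx
    by_contra hall
    push_neg at hall
    have h1 := hS.dotProduct_mulVec_pos hx
    rw [star_trivial, smul_mulVec, dotProduct_smul, smul_eq_mul] at h1
    have h2 : (∑ l, vecMulVec (g l) (g l)) = ∑ l, (1:ℝ) • vecMulVec (g l) (g l) := by
      simp
    rw [h2, el_quadform] at h1
    simp [hall] at h1
  -- convexity
  refine ⟨?_, ?_, ?_⟩
  · intro a ha b hb s t hs ht hst
    intro l
    simp only [add_dotProduct, smul_dotProduct, smul_eq_mul]
    have hA := ha l
    have hB := hb l
    rcases eq_or_lt_of_le hs with h | h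
    · have ht1 : t = 1 := by linarith
      simp [← h, ht1]; linarith
    · nlinarith [mul_nonneg ht hB.le]
  · intro lam hlam
    constructor
    · -- derivative
      have h : ∀ l, HasFDerivAt (fun lam : Fin d → ℝ => (1 + lam ⬝ᵥ g l)⁻¹ • g l)
          (((-((1 + lam ⬝ᵥ g l) ^ 2)⁻¹) • el_dotCLM d (g l)).smulRight (g l)) lam := by
        intro l
        have h1 : HasFDerivAt (fun lam : Fin d → ℝ => 1 + lam ⬝ᵥ g l)
            (el_dotCLM d (g l)) lam := ((el_dotCLM d (g l)).hasFDerivAt).const_add 1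
        have h2 : HasDerivAt (fun t : ℝ => t⁻¹) (-((1 + lam ⬝ᵥ g l) ^ 2)⁻¹)
            (1 + lam ⬝ᵥ g l) := hasDerivAt_inv (hlam l).ne'
        exact ((h2.comp_hasFDerivAt lam h1).smul_const (g l))
      have hsum := (HasFDerivAt.fun_sum (fun l (_ : l ∈ Finset.univ) => h l)).fun_const_smul ((n:ℝ)⁻¹)
      refine hsum.congr_fderiv (Eq.symm ?_)
      ext v i
      simp [el_dotCLM, Matrix.mulVecLin, Matrix.mulVec, dotProduct, vecMulVec_apply,
        Finset.sum_apply, Matrix.sum_apply, Matrix.smul_apply, Matrix.neg_apply,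
        Finset.mul_sum, Finset.sum_mul, mul_comm, mul_assoc, mul_left_comm]
    · -- positive definiteness
      rw [neg_neg]
      apply PosDef.of_dotProduct_mulVec_pos
      · ext i j
        simp only [conjTranspose_apply, Matrix.smul_apply, Matrix.sum_apply,
          vecMulVec_apply, star_trivial, smul_eq_mul]
        ring_nf
        exact congrArg _ (Finset.sum_congr rfl fun l _ => by ring)
      · intro x hx
        rw [star_trivial, smul_mulVec, dotProduct_smul, smul_eq_mul, el_quadform]
        apply mul_pos hnR
        obtain ⟨l0, hl0⟩ := hex x hx
        apply Finset.sum_pos' (fun l _ => by positivity)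
        exact ⟨l0, Finset.mem_univ _,
          mul_pos (inv_pos.mpr (pow_pos (hlam l0) 2)) (sq_pos_of_ne_zero hl0)⟩
  · -- injectivity
    intro a ha b hb hfab
    by_contra hne
    have hx : a - b ≠ 0 := sub_ne_zero.mpr hne
    obtain ⟨l0, hl0⟩ := hex (a - b) hx
    have hfd : (fun lam : Fin d → ℝ => (n : ℝ)⁻¹ • ∑ l, (1 + lam ⬝ᵥ g l)⁻¹ • g l) a -
        (fun lam : Fin d → ℝ => (n : ℝ)⁻¹ • ∑ l, (1 + lam ⬝ᵥ g l)⁻¹ • g l) b = 0 := by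
      rw [hfab]; simp
    have hdot : (a - b) ⬝ᵥ ((n : ℝ)⁻¹ • ∑ l, ((1 + a ⬝ᵥ g l)⁻¹ - (1 + b ⬝ᵥ g l)⁻¹) • g l)
        = 0 := by
      have : (n : ℝ)⁻¹ • ∑ l, ((1 + a ⬝ᵥ g l)⁻¹ - (1 + b ⬝ᵥ g l)⁻¹) • g l
          = ((n : ℝ)⁻¹ • ∑ l, (1 + a ⬝ᵥ g l)⁻¹ • g l) -
            ((n : ℝ)⁻¹ • ∑ l, (1 + b ⬝ᵥ g l)⁻¹ • g l) := by
        rw [← smul_sub, ← Finset.sum_sub_distrib]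
        congr 1
        exact Finset.sum_congr rfl fun l _ => by rw [sub_smul]
      rw [this, hfd, dotProduct_zero]
    rw [dotProduct_smul, smul_eq_mul, el_dot_sum_smul] at hdot
    have key : ∀ l, ((1 + a ⬝ᵥ g l)⁻¹ - (1 + b ⬝ᵥ g l)⁻¹) * ((a - b) ⬝ᵥ g l)
        = -(((a ⬝ᵥ g l) - (b ⬝ᵥ g l))^2 * ((1 + a ⬝ᵥ g l) * (1 + b ⬝ᵥ g l))⁻¹) := by
      intro l
      have hu := (ha l).ne'
      have hv := (hb l).ne'
      rw [sub_dotProduct]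
      field_simp
      ring
    have hneg : ∑ l, ((1 + a ⬝ᵥ g l)⁻¹ - (1 + b ⬝ᵥ g l)⁻¹) * ((a - b) ⬝ᵥ g l) < 0 := by
      have h0 : (0:ℝ) = ∑ _l : Fin n, (0:ℝ) := by simp
      rw [h0]
      refine Finset.sum_lt_sum (fun l _ => ?_) ⟨l0, Finset.mem_univ l0, ?_⟩
      · rw [key l]
        have := mul_nonneg (sq_nonneg ((a ⬝ᵥ g l) - (b ⬝ᵥ g l)))
          (le_of_lt (inv_pos.mpr (mul_pos (ha l) (hb l))))
        linarith
      · rw [key l0]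
        have hne0 : (a ⬝ᵥ g l0) - (b ⬝ᵥ g l0) ≠ 0 := by
          rwa [← sub_dotProduct]
        have := mul_pos (sq_pos_of_ne_zero hne0)
          (inv_pos.mpr (mul_pos (ha l0) (hb l0)))
        linarith
    have : (n : ℝ)⁻¹ * ∑ l, ((1 + a ⬝ᵥ g l)⁻¹ - (1 + b ⬝ᵥ g l)⁻¹) * ((a - b) ⬝ᵥ g l) < 0 :=
      mul_neg_of_pos_of_neg hnR hneg
    rw [hdot] at this
    exact lt_irrefl 0 this
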